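/- If a permutation group G acts transitively on a finite set X and is generated by permutations g₁, …, g_s with g₁⋯g_s = 1, and gᵢ has cᵢ cycles on X, then c₁ + ⋯ + c_s ≤ (s − 2)·|X| + 2. -/

import Mathlib

set_option linter.unusedSectionVars false

noncomputable def cyclesCount {X : Type*} (g : Equiv.Perm X) : ℕ :=
  Nat.card (MulAction.orbitRel.Quotient (Subgroup.zpowers g) X)

namespace ReeHelper

open Module LinearMap

variable {X : Type*} [Fintype X]

/-- The linear action of a permutation on `X → ℚ` by precomposition with the inverse. -/
noncomputable def Mp (σ : Equiv.Perm X) : (X → ℚ) →ₗ[ℚ] (X → ℚ) :=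
  LinearMap.funLeft ℚ ℚ ⇑σ.symm

lemma Mp_apply (σ : Equiv.Perm X) (f : X → ℚ) (x : X) : Mp σ f x = f (σ.symm x) := rfl

lemma Mp_one : Mp (1 : Equiv.Perm X) = LinearMap.id := rfl

lemma Mp_mul (σ τ : Equiv.Perm X) : Mp (σ * τ) = Mp σ ∘ₗ Mp τ := by
  ext f x
  rfl

/-- The subgroup of permutations fixing a given function. -/
def fixSub (f : X → ℚ) : Subgroup (Equiv.Perm X) where
  carrier := {τ | ∀ x, f (τ x) = f x}
  one_mem' := fun _ => rfl
  mul_mem' := by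
    intro a b ha hb x
    rw [Equiv.Perm.mul_apply, ha, hb]
  inv_mem' := by
    intro a ha x
    have := ha (a⁻¹ x)
    rw [show a (a⁻¹ x) = x from Equiv.apply_symm_apply a x] at this
    exact this.symm

lemma mem_fixSub {σ : Equiv.Perm X} {f : X → ℚ} (h : Mp σ f = f) : σ ∈ fixSub f := by
  intro x
  have := congrFun h (σ x)
  rw [Mp_apply, Equiv.symm_apply_apply] at this
  exact this.symm

lemma finrank_ker_Mp (σ : Equiv.Perm X) :
    Module.finrank ℚ (LinearMap.ker (Mp σ - 1)) = cyclesCount σ := by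
  classical
  have hconst : ∀ f : LinearMap.ker (Mp σ - 1), ∀ x y : X,
      (MulAction.orbitRel (Subgroup.zpowers σ) X).r x y → (f : X → ℚ) x = (f : X → ℚ) y := by
    intro f x y hxy
    have hf : Mp σ (f : X → ℚ) = (f : X → ℚ) := by
      have := f.2
      rw [LinearMap.mem_ker, LinearMap.sub_apply, Module.End.one_apply, sub_eq_zero] at this
      exact this
    have hle : Subgroup.zpowers σ ≤ fixSub (f : X → ℚ) :=
      Subgroup.zpowers_le.mpr (mem_fixSub hf)
    obtain ⟨h, rfl⟩ := hxy
    exact hle h.2 y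
  let e : (LinearMap.ker (Mp σ - 1)) ≃ₗ[ℚ]
      (MulAction.orbitRel.Quotient (Subgroup.zpowers σ) X → ℚ) :=
    { toFun := fun f => Quotient.lift (f : X → ℚ) (hconst f)
      map_add' := by
        intro a b
        funext q
        induction q using Quotient.ind
        rfl
      map_smul' := by
        intro c a
        funext q
        induction q using Quotient.ind
        rfl
      invFun := fun h =>
        ⟨fun x => h (Quotient.mk (MulAction.orbitRel (Subgroup.zpowers σ) X) x), by
          rw [LinearMap.mem_ker]
          funext x
          rw [LinearMap.sub_apply, Module.End.one_apply]
          have : Quotient.mk (MulAction.orbitRel (Subgroup.zpowers σ) X) (σ.symm x)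
              = Quotient.mk (MulAction.orbitRel (Subgroup.zpowers σ) X) x := by
            apply Quotient.sound
            exact ⟨⟨σ⁻¹, inv_mem (Subgroup.mem_zpowers σ)⟩, rfl⟩
          show h _ - h _ = (0 : ℚ)
          rw [this]
          exact sub_self _⟩
      left_inv := by
        intro f
        apply Subtype.ext
        rfl
      right_inv := by
        intro h
        funext q
        induction q using Quotient.ind
        rfl }
  have : Finite (MulAction.orbitRel.Quotient (Subgroup.zpowers σ) X) := Quotient.finite _
  letI : Fintype (MulAction.orbitRel.Quotient (Subgroup.zpowers σ) X) := Fintype.ofFinite _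
  rw [LinearEquiv.finrank_eq e, Module.finrank_pi, cyclesCount, Nat.card_eq_fintype_card]


variable {s : ℕ} (g : Fin s → Equiv.Perm X)

/-- `Np g i = Mp (g i) - 1`. -/
noncomputable def Np (i : Fin s) : (X → ℚ) →ₗ[ℚ] (X → ℚ) := Mp (g i) - 1

/-- Partial products. -/
noncomputable def Pp (k : ℕ) : Equiv.Perm X := ((List.ofFn g).take k).prod

lemma Pp_zero : Pp g 0 = 1 := rfl

lemma Pp_last (hprod : (List.ofFn g).prod = 1) : Pp g s = 1 := by
  rw [Pp, List.take_of_length_le (by simp), hprod]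

lemma Pp_succ (k : ℕ) (hk : k < s) : Pp g (k + 1) = Pp g k * g ⟨k, hk⟩ := by
  have hk' : k < (List.ofFn g).length := by simpa using hk
  have := List.prod_take_succ (List.ofFn g) k hk'
  simpa [Pp] using this

/-- The Scott map. -/
noncomputable def Phi : (∀ i : Fin s, LinearMap.range (Np g i)) →ₗ[ℚ] (X → ℚ) :=
  ∑ i : Fin s, (Mp (Pp g i.1)) ∘ₗ ((LinearMap.range (Np g i)).subtype ∘ₗ LinearMap.proj i)

noncomputable def Psi : (X → ℚ) →ₗ[ℚ] (∀ i : Fin s, LinearMap.range (Np g i)) :=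
  LinearMap.pi fun i => (Np g i).rangeRestrict

lemma Phi_apply (v : ∀ i : Fin s, LinearMap.range (Np g i)) :
    Phi g v = ∑ i : Fin s, Mp (Pp g i.1) ((v i : X → ℚ)) := by
  rw [Phi, LinearMap.sum_apply]
  rfl

lemma key_comp (i : Fin s) :
    Mp (Pp g i.1) ∘ₗ Np g i = Mp (Pp g (i.1 + 1)) - Mp (Pp g i.1) := by
  rw [Pp_succ g i.1 i.isLt, Mp_mul, Np]
  ext f x
  simp [LinearMap.sub_apply, Mp_apply]

lemma phi_psi (hprod : (List.ofFn g).prod = 1) (f : X → ℚ) : Phi g (Psi g f) = 0 := by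
  rw [Phi_apply]
  have h1 : ∀ i : Fin s, Mp (Pp g i.1) ((Psi g f i : X → ℚ))
      = Mp (Pp g (i.1 + 1)) f - Mp (Pp g i.1) f := by
    intro i
    have : ((Psi g f i : X → ℚ)) = Np g i f := rfl
    rw [this, ← LinearMap.comp_apply, key_comp, LinearMap.sub_apply]
  rw [Finset.sum_congr rfl fun i _ => h1 i]
  rw [Fin.sum_univ_eq_sum_range (fun k => Mp (Pp g (k + 1)) f - Mp (Pp g k) f) s]
  rw [Finset.sum_range_sub (fun k => Mp (Pp g k) f) s]
  rw [Pp_zero, Pp_last g hprod, Mp_one]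
  simp

lemma rank_add_cycles (i : Fin s) :
    Module.finrank ℚ (LinearMap.range (Np g i)) + cyclesCount (g i) = Fintype.card X := by
  have h1 := LinearMap.finrank_range_add_finrank_ker (Np g i)
  rw [show LinearMap.ker (Np g i) = LinearMap.ker (Mp (g i) - 1) from rfl,
    finrank_ker_Mp (g i), Module.finrank_pi] at h1
  exact h1

/-- The subgroup of permutations whose `Mp`-precomposition fixes a functional. -/
def dualFixSub (l : Module.Dual ℚ (X → ℚ)) : Subgroup (Equiv.Perm X) where
  carrier := {τ | ∀ u, l (Mp τ u) = l u}
  one_mem' := by intro u; rw [Mp_one]; rfl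
  mul_mem' := by
    intro a b ha hb u
    rw [Mp_mul, LinearMap.comp_apply, ha, hb]
  inv_mem' := by
    intro a ha u
    have h2 : Mp a (Mp a⁻¹ u) = u := by
      rw [show Mp a (Mp a⁻¹ u) = (Mp a ∘ₗ Mp a⁻¹) u from rfl, ← Mp_mul, mul_inv_cancel, Mp_one]
      rfl
    have := ha (Mp a⁻¹ u)
    rw [h2] at this
    exact this.symm

lemma kerPsi_le (x₀ : X)
    (htrans : MulAction.IsPretransitive (Subgroup.closure (Set.range g)) X) :
    Module.finrank ℚ (LinearMap.ker (Psi g)) ≤ 1 := by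
  classical
  have hconst : ∀ f ∈ LinearMap.ker (Psi g), ∀ x : X, f x = f x₀ := by
    intro f hf x
    have hfix : ∀ σ ∈ Set.range g, Mp σ f = f := by
      rintro σ ⟨i, rfl⟩
      have h0 : Np g i f = 0 := by
        rw [LinearMap.mem_ker] at hf
        have := congrFun hf i
        have h1 := congrArg Subtype.val this
        simpa [Psi] using h1
      rw [Np, LinearMap.sub_apply, Module.End.one_apply, sub_eq_zero] at h0
      exact h0
    have hle : Subgroup.closure (Set.range g) ≤ fixSub f :=
      (Subgroup.closure_le _).mpr fun σ hσ => mem_fixSub (hfix σ hσ)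
    obtain ⟨τ, hτ⟩ := MulAction.exists_smul_eq (Subgroup.closure (Set.range g)) x₀ x
    have h2 : f ((τ : Equiv.Perm X) x₀) = f x₀ := hle τ.2 x₀
    rw [← hτ]
    exact h2
  have hinj : Function.Injective
      ((LinearMap.proj x₀ : (X → ℚ) →ₗ[ℚ] ℚ) ∘ₗ (LinearMap.ker (Psi g)).subtype) := by
    intro a b hab
    apply Subtype.ext
    funext x
    rw [hconst a.1 a.2 x, hconst b.1 b.2 x]
    exact hab
  have := LinearMap.finrank_le_finrank_of_injective hinj
  simpa using this

lemma annPhi_le (x₀ : X)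
    (htrans : MulAction.IsPretransitive (Subgroup.closure (Set.range g)) X) :
    Module.finrank ℚ ((LinearMap.range (Phi g)).dualAnnihilator) ≤ 1 := by
  classical
  have hsingles : ∀ l ∈ (LinearMap.range (Phi g)).dualAnnihilator, ∀ x : X,
      l (Pi.single x (1 : ℚ)) = l (Pi.single x₀ (1 : ℚ)) := by
    intro l hl x
    rw [Submodule.mem_dualAnnihilator] at hl
    have hgen : ∀ (i : Fin s) (u : X → ℚ), l (Mp (Pp g i.1) (Np g i u)) = 0 := by
      intro i u
      apply hl
      refine ⟨Pi.single i ((Np g i).rangeRestrict u), ?_⟩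
      rw [Phi_apply]
      rw [Finset.sum_eq_single i]
      · rw [Pi.single_eq_same]
        rfl
      · intro j _ hj
        rw [Pi.single_eq_of_ne hj]
        simp
      · simp
    have hstep : ∀ (i : Fin s) (u : X → ℚ),
        l (Mp (Pp g i.1) (Mp (g i) u)) = l (Mp (Pp g i.1) u) := by
      intro i u
      have h0 := hgen i u
      have h1 : Np g i u = Mp (g i) u - u := rfl
      rw [h1, map_sub, map_sub] at h0
      linarith
    have hPfix : ∀ k, k ≤ s → ∀ u, l (Mp (Pp g k) u) = l u := by
      intro k
      induction k with
      | zero => intro _ u; rw [Pp_zero, Mp_one]; rfl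
      | succ k ih =>
        intro hk u
        have hk' : k < s := hk
        have h2 : Mp (Pp g (k + 1)) u = Mp (Pp g k) (Mp (g ⟨k, hk'⟩) u) := by
          rw [Pp_succ g k hk', Mp_mul]
          rfl
        rw [h2, hstep ⟨k, hk'⟩ u]
        exact ih (le_of_lt hk') u
    have hgfix : ∀ i : Fin s, ∀ u, l (Mp (g i) u) = l u := by
      intro i u
      have h1 := hPfix i.1 (le_of_lt i.isLt) (Mp (g i) u)
      have h2 : l (Mp (Pp g i.1) (Mp (g i) u)) = l u := by
        have h3 : Mp (Pp g (i.1 + 1)) u = Mp (Pp g i.1) (Mp (g i) u) := by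
          rw [Pp_succ g i.1 i.isLt, Mp_mul]
          rfl
        rw [← h3]
        exact hPfix (i.1 + 1) i.isLt u
      rw [h1] at h2
      exact h2
    have hle : Subgroup.closure (Set.range g) ≤ dualFixSub l := by
      apply (Subgroup.closure_le _).mpr
      rintro σ ⟨i, rfl⟩
      exact hgfix i
    obtain ⟨τ, hτ⟩ := MulAction.exists_smul_eq (Subgroup.closure (Set.range g)) x₀ x
    have hτ' : (τ : Equiv.Perm X) x₀ = x := hτ
    have hsingle : Mp (τ : Equiv.Perm X) (Pi.single x₀ (1 : ℚ)) = Pi.single x (1 : ℚ) := by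
      funext z
      rw [Mp_apply, Pi.single_apply, Pi.single_apply]
      by_cases hz : z = x
      · subst hz
        rw [if_pos (by rw [Equiv.symm_apply_eq, hτ']), if_pos rfl]
      · rw [if_neg (fun hc => hz (by rw [← hτ', ← hc, Equiv.apply_symm_apply])), if_neg hz]
    rw [← hsingle]
    exact hle τ.2 (Pi.single x₀ 1)
  have hinj : Function.Injective
      ((Module.Dual.eval ℚ (X → ℚ) (Pi.single x₀ (1 : ℚ))) ∘ₗ
        ((LinearMap.range (Phi g)).dualAnnihilator).subtype) := by
    intro a b hab
    apply Subtype.ext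
    apply Basis.ext (Pi.basisFun ℚ X)
    intro x
    rw [Pi.basisFun_apply]
    rw [hsingles a.1 a.2 x, hsingles b.1 b.2 x]
    exact hab
  have := LinearMap.finrank_le_finrank_of_injective hinj
  simpa using this

lemma cyclesCount_le (σ : Equiv.Perm X) : cyclesCount σ ≤ Fintype.card X := by
  rw [cyclesCount, ← Nat.card_eq_fintype_card]
  exact Nat.card_le_card_of_surjective _
    (fun q => Quotient.inductionOn q fun x => ⟨x, rfl⟩)

end ReeHelper

theorem stmt_12 {X : Type*} [Fintype X] (n s : ℕ) (hs : 1 ≤ s) (hX : Fintype.card X = n)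
    (g : Fin s → Equiv.Perm X) (hprod : (List.ofFn g).prod = 1)
    (htrans : MulAction.IsPretransitive (Subgroup.closure (Set.range g)) X) :
    ∑ i, cyclesCount (g i) ≤ (s - 2) * n + 2 := by
  classical
  rcases Nat.eq_zero_or_pos n with hn | hn
  · have hz : ∀ i : Fin s, cyclesCount (g i) = 0 := by
      intro i
      have := ReeHelper.cyclesCount_le (g i)
      omega
    simp [hz]
  · obtain ⟨x₀⟩ : Nonempty X := Fintype.card_pos_iff.mp (by rw [hX]; exact hn)
    have hD : Module.finrank ℚ (∀ i : Fin s, LinearMap.range (ReeHelper.Np g i))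
        = ∑ i, Module.finrank ℚ (LinearMap.range (ReeHelper.Np g i)) :=
      Module.finrank_pi_fintype ℚ
    have hsplit := LinearMap.finrank_range_add_finrank_ker (ReeHelper.Phi g)
    have hker1 : LinearMap.range (ReeHelper.Psi g) ≤ LinearMap.ker (ReeHelper.Phi g) := by
      rintro _ ⟨f, rfl⟩
      exact LinearMap.mem_ker.mpr (ReeHelper.phi_psi g hprod f)
    have hker2 := Submodule.finrank_mono hker1
    have hker3 := LinearMap.finrank_range_add_finrank_ker (ReeHelper.Psi g)
    have hker4 := ReeHelper.kerPsi_le g x₀ htrans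
    have hdual1 : Module.finrank ℚ (LinearMap.range (ReeHelper.Phi g))
        + Module.finrank ℚ ((LinearMap.range (ReeHelper.Phi g)).dualAnnihilator) = n := by
      have e := Subspace.quotEquivAnnihilator (LinearMap.range (ReeHelper.Phi g))
      have h2 := Submodule.finrank_quotient_add_finrank (LinearMap.range (ReeHelper.Phi g))
      rw [LinearEquiv.finrank_eq e, Module.finrank_pi, hX] at h2
      omega
    have hdual2 := ReeHelper.annPhi_le g x₀ htrans
    have hpi : Module.finrank ℚ (X → ℚ) = n := by rw [Module.finrank_pi, hX]
    rw [hpi] at hker3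
    have hsum : (∑ i, cyclesCount (g i))
        + (∑ i, Module.finrank ℚ (LinearMap.range (ReeHelper.Np g i))) = s * n := by
      rw [← Finset.sum_add_distrib]
      have hterm : ∀ i ∈ Finset.univ, cyclesCount (g i)
          + Module.finrank ℚ (LinearMap.range (ReeHelper.Np g i)) = n := by
        intro i _
        have := ReeHelper.rank_add_cycles g i
        omega
      rw [Finset.sum_congr rfl hterm, Finset.sum_const, Finset.card_univ, Fintype.card_fin,
        smul_eq_mul]
    rw [hD] at hsplit
    rcases Nat.lt_or_ge s 2 with hs2 | hs2
    · have hs1 : s = 1 := by omega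
      subst hs1
      omega
    · have hdist : (s - 2) * n = s * n - 2 * n := Nat.sub_mul s 2 n
      have hmul : 2 * n ≤ s * n := Nat.mul_le_mul_right n hs2
      rw [hdist]
      generalize hA : s * n = A at hsum hmul ⊢
      omega
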